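/- (Lemma 3.7) Let f_X be a probability density on ℝ with f_X(x) ≤ L for all x ∈ ℝ, and suppose α > −∞ is such that f_X(x) = 0 for x < α. Let f_N denote the N-fold convolution of f_X. Then for all N ≥ 1 and all x > Nα, f_N(x) ≤ (L^N / (N−1)!) · (x − Nα)^{N−1}. (Symmetrically, if β < ∞ and f_X(x) = 0 for x > β, then f_N(x) ≤ (L^N / (N−1)!) · (Nβ − x)^{N−1} for all x < Nβ.) -/

import Mathlib

open MeasureTheory Real Set Filter
open scoped ENNReal NNReal

noncomputable section

/-- Extended moment generating function `E[e^{tX}]` for a random variable with density `f`. -/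
def MGFe (f : ℝ → ℝ) (t : ℝ) : ℝ≥0∞ :=
  ∫⁻ x, ENNReal.ofReal (Real.exp (t * x) * f x)

/-- Cumulant generating function (real-valued, meaningful where `MGFe` is finite). -/
def Lam (f : ℝ → ℝ) (t : ℝ) : ℝ := Real.log (MGFe f t).toReal

/-- Extended-real-valued cumulant generating function. -/
def ELam (f : ℝ → ℝ) (t : ℝ) : EReal :=
  if MGFe f t = ⊤ then ⊤ else ((Real.log (MGFe f t).toReal : ℝ) : EReal)

/-- Legendre transform `Λ*(y) = sup_x (y·x − Λ(x))`, with values in `EReal`. -/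
def LegendreE (f : ℝ → ℝ) (y : ℝ) : EReal :=
  ⨆ x : ℝ, ((y * x : ℝ) : EReal) - ELam f x

/-- `iterConv f N` is the `N`-fold convolution of the density `f`, i.e. the density of
`S_N = X₁ + ⋯ + X_N` for i.i.d. `Xᵢ` with density `f` (set to `0` for `N = 0`). -/
def iterConv (f : ℝ → ℝ) : ℕ → ℝ → ℝ
  | 0 => fun _ => 0
  | 1 => f
  | (n+2) => fun x => ∫ y, iterConv f (n+1) (x - y) * f y

end

lemma iterConv_nonneg (f : ℝ → ℝ) (hf : ∀ x, 0 ≤ f x) :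
    ∀ N : ℕ, ∀ x : ℝ, 0 ≤ iterConv f N x := by
  intro N
  induction N with
  | zero => intro x; simp [iterConv]
  | succ n ih =>
    cases n with
    | zero => intro x; exact hf x
    | succ m =>
      intro x
      show 0 ≤ ∫ y, iterConv f (m+1) (x - y) * f y
      exact integral_nonneg fun y => mul_nonneg (ih _) (hf y)

lemma iterConv_eq_zero (f : ℝ → ℝ) (α : ℝ) (hα : ∀ x, x < α → f x = 0) :
    ∀ N : ℕ, ∀ x : ℝ, x < (N : ℝ) * α → iterConv f N x = 0 := by
  intro N
  induction N with
  | zero => intro x _; simp [iterConv]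
  | succ n ih =>
    cases n with
    | zero => intro x hx; exact hα x (by simpa using hx)
    | succ m =>
      intro x hx
      show (∫ y, iterConv f (m+1) (x - y) * f y) = 0
      have h0 : ∀ y : ℝ, iterConv f (m+1) (x - y) * f y = 0 := by
        intro y
        rcases lt_or_ge y α with hy | hy
        · rw [hα y hy, mul_zero]
        · rw [ih (x - y) (by push_cast at hx ⊢; linarith), zero_mul]
      simp only [h0, integral_zero]

lemma iterConv_comp_neg (f : ℝ → ℝ) :
    ∀ N : ℕ, ∀ x : ℝ, iterConv (fun y => f (-y)) N x = iterConv f N (-x) := by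
  intro N
  induction N with
  | zero => intro x; simp [iterConv]
  | succ n ih =>
    cases n with
    | zero => intro x; rfl
    | succ m =>
      intro x
      show (∫ y, iterConv (fun y => f (-y)) (m+1) (x - y) * f (-y))
          = ∫ y, iterConv f (m+1) (-x - y) * f y
      have h1 : (fun y : ℝ => iterConv (fun y => f (-y)) (m+1) (x - y) * f (-y))
          = fun y : ℝ => iterConv f (m+1) (-x - (-y)) * f (-y) := by
        funext y
        rw [ih (x - y)]
        ring_nf
      rw [h1]
      exact integral_neg_eq_self (fun y => iterConv f (m+1) (-x - y) * f y) volume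

lemma iterConv_bound (f : ℝ → ℝ) (L α : ℝ)
    (hf_nonneg : ∀ x, 0 ≤ f x) (hL : ∀ x, f x ≤ L)
    (hα : ∀ x, x < α → f x = 0) :
    ∀ m : ℕ, ∀ x : ℝ, ((m : ℝ) + 1) * α < x →
      iterConv f (m+1) x ≤ L ^ (m+1) / (Nat.factorial m) * (x - ((m : ℝ) + 1) * α) ^ m := by
  have hL0 : 0 ≤ L := le_trans (hf_nonneg 0) (hL 0)
  intro m
  induction m with
  | zero => intro x _; simpa [iterConv] using hL x
  | succ m ih =>
    intro x hx
    set b : ℝ := x - ((m : ℝ) + 1) * α with hb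
    have hαb : α < b := by rw [hb]; push_cast at hx; linarith
    set c : ℝ := L ^ (m+2) / (Nat.factorial m) with hc
    have hc0 : 0 ≤ c := div_nonneg (pow_nonneg hL0 _) (Nat.cast_nonneg _)
    set g : ℝ → ℝ := (Icc α b).indicator (fun y => c * (b - y) ^ m) with hg
    have hg_nonneg : ∀ y, 0 ≤ g y := by
      intro y
      refine indicator_nonneg (fun y hy => ?_) y
      exact mul_nonneg hc0 (pow_nonneg (by linarith [hy.2]) m)
    have hg_int : Integrable g := by
      refine IntegrableOn.integrable_indicator ?_ measurableSet_Icc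
      exact (Continuous.integrableOn_Icc (by continuity))
    have key : iterConv f (m+2) x ≤ ∫ y, g y := by
      show (∫ y, iterConv f (m+1) (x - y) * f y) ≤ ∫ y, g y
      refine integral_mono_of_nonneg (Eventually.of_forall fun y =>
        mul_nonneg (iterConv_nonneg f hf_nonneg _ _) (hf_nonneg y)) hg_int ?_
      have hb_ne : ∀ᵐ (y : ℝ), y ≠ b := by
        refine ae_iff.2 ?_
        simpa using measure_singleton (α := ℝ) b
      filter_upwards [hb_ne] with y hyb
      rcases lt_or_ge y α with hy | hy
      · rw [hα y hy, mul_zero]; exact hg_nonneg y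
      rcases lt_or_ge b y with hy2 | hy2
      · rw [iterConv_eq_zero f α hα (m+1) (x - y) (by push_cast; rw [hb] at hy2; linarith),
          zero_mul]
        exact hg_nonneg y
      have hylt : y < b := lt_of_le_of_ne hy2 hyb
      have hmem : y ∈ Icc α b := ⟨hy, hy2⟩
      rw [hg, indicator_of_mem hmem]
      have h1 : iterConv f (m+1) (x - y) ≤ L ^ (m+1) / (Nat.factorial m) * (x - y - ((m:ℝ)+1) * α) ^ m :=
        ih (x - y) (by rw [hb] at hylt; linarith)
      have h2 : x - y - ((m:ℝ)+1) * α = b - y := by rw [hb]; ring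
      rw [h2] at h1
      calc iterConv f (m+1) (x - y) * f y
          ≤ (L ^ (m+1) / (Nat.factorial m) * (b - y) ^ m) * L :=
            mul_le_mul h1 (hL y) (hf_nonneg y)
              (mul_nonneg (div_nonneg (pow_nonneg hL0 _) (Nat.cast_nonneg _))
                (pow_nonneg (by linarith) m))
        _ = c * (b - y) ^ m := by rw [hc, pow_succ]; ring
    have hval : (∫ y, g y) = c * ((b - α) ^ (m+1) / ((m : ℝ) + 1)) := by
      rw [hg, integral_indicator measurableSet_Icc, MeasureTheory.integral_Icc_eq_integral_Ioc,
        ← intervalIntegral.integral_of_le hαb.le, intervalIntegral.integral_const_mul,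
        intervalIntegral.integral_comp_sub_left (fun u => u ^ m) b]
      simp [integral_pow]
    have hfinal : c * ((b - α) ^ (m+1) / ((m : ℝ) + 1))
        = L ^ (m+2) / (Nat.factorial (m+1)) * (x - ((m:ℝ)+1+1) * α) ^ (m+1) := by
      have hbα : b - α = x - ((m:ℝ)+1+1) * α := by rw [hb]; ring
      rw [hbα, hc, Nat.factorial_succ]
      push_cast
      rw [div_mul_div_comm, div_mul_eq_mul_div]
      congr 1
      ring
    calc iterConv f (m+2) x ≤ ∫ y, g y := key
      _ = _ := by rw [hval, hfinal]; push_cast; ring_nf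

/-- **Lemma 3.7.** If the probability density `f_X` is bounded by `L` and supported in
`[α, ∞)` (resp. `(−∞, β]`), then the `N`-fold convolution satisfies
`f_N(x) ≤ (L^N/(N−1)!) (x − Nα)^{N−1}` for `x > Nα`
(resp. `f_N(x) ≤ (L^N/(N−1)!) (Nβ − x)^{N−1}` for `x < Nβ`). -/
theorem lemma_3_7
    (f : ℝ → ℝ) (L : ℝ)
    (hf_nonneg : ∀ x, 0 ≤ f x)
    (hf_meas : Measurable f)
    (hf_mass : ∫⁻ x, ENNReal.ofReal (f x) = 1)
    (hL : ∀ x, f x ≤ L) :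
    (∀ α : ℝ, (∀ x : ℝ, x < α → f x = 0) →
      ∀ N : ℕ, 1 ≤ N → ∀ x : ℝ, (N : ℝ) * α < x →
        iterConv f N x ≤ L ^ N / (Nat.factorial (N - 1)) * (x - (N : ℝ) * α) ^ (N - 1)) ∧
    (∀ β : ℝ, (∀ x : ℝ, β < x → f x = 0) →
      ∀ N : ℕ, 1 ≤ N → ∀ x : ℝ, x < (N : ℝ) * β →
        iterConv f N x ≤ L ^ N / (Nat.factorial (N - 1)) * ((N : ℝ) * β - x) ^ (N - 1)) := by
  constructor
  · intro α hα N hN x hx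
    obtain ⟨m, rfl⟩ : ∃ m, N = m + 1 := ⟨N - 1, (Nat.succ_pred_eq_of_pos hN).symm⟩
    have h := iterConv_bound f L α hf_nonneg hL hα m x (by push_cast at hx ⊢; linarith)
    simpa [Nat.succ_sub_one] using h
  · intro β hβ N hN x hx
    obtain ⟨m, rfl⟩ : ∃ m, N = m + 1 := ⟨N - 1, (Nat.succ_pred_eq_of_pos hN).symm⟩
    have hβ' : ∀ y : ℝ, y < -β → f (-y) = 0 := fun y hy => hβ (-y) (by linarith)
    have h := iterConv_bound (fun y => f (-y)) L (-β) (fun y => hf_nonneg (-y)) (fun y => hL (-y)) hβ' m (-x)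
      (by push_cast at hx ⊢; linarith)
    rw [iterConv_comp_neg f (m+1) (-x), neg_neg] at h
    have heq : (-x - ((m:ℝ) + 1) * (-β)) = ((m:ℝ)+1) * β - x := by ring
    rw [heq] at h
    simpa [Nat.succ_sub_one] using h
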